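/- Let θ be a C^{1,1} vector field and u a vector field in H²(U)^d on a bounded open set U ⊂ ℝ^d containing Ω̄, with T_t = id + tθ and I_t = det(DT_t). Then the map t ↦ I_t (u ∘ T_t) from [0,ε] to L²(Ω)^d is differentiable at t = 0 with derivative ∇·(u ⊗ θ) := (div(u₁θ), …, div(u_d θ))ᵀ, i.e., lim_{t→0} (I_t u∘T_t − u)/t = (div(u_j θ))_{j=1}^d componentwise in L²(Ω). -/

import Mathlib

open scoped BigOperators
open Filter MeasureTheory

noncomputable def pd {d : ℕ} (f : (Fin d → ℝ) → ℝ) (j : Fin d) (x : Fin d → ℝ) : ℝ :=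
  fderiv ℝ f x (Pi.single j 1)

noncomputable def jac {d : ℕ} (θ : (Fin d → ℝ) → (Fin d → ℝ)) (x : Fin d → ℝ) :
    Matrix (Fin d) (Fin d) ℝ :=
  Matrix.of fun i j => pd (fun y => θ y i) j x

noncomputable def divg {d : ℕ} (θ : (Fin d → ℝ) → (Fin d → ℝ)) (x : Fin d → ℝ) : ℝ :=
  ∑ i, pd (fun y => θ y i) i x

def dot {d : ℕ} (a b : Fin d → ℝ) : ℝ := ∑ i, a i * b i

def outer {d : ℕ} (a b : Fin d → ℝ) : Matrix (Fin d) (Fin d) ℝ :=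
  Matrix.of fun i j => a i * b j

/- auxiliary lemmas -/


noncomputable def det' {d : ℕ} (A : Fin d → Fin d → ℝ) : ℝ := Matrix.det (Matrix.of A)

lemma contDiff_det' {d : ℕ} : ContDiff ℝ ⊤ (det' (d := d)) := by
  have : det' (d := d) = fun A => ∑ σ : Equiv.Perm (Fin d),
      ((Equiv.Perm.sign σ : ℤ) : ℝ) * ∏ i, A (σ i) i := by
    funext A
    rw [det', Matrix.det_apply]
    simp [Units.smul_def, zsmul_eq_mul]
  rw [this]
  apply ContDiff.sum
  intro σ _
  apply ContDiff.mul contDiff_const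
  apply contDiff_prod (𝕜 := ℝ) (E := Fin d → Fin d → ℝ)
  intro i _
  exact ((ContinuousLinearMap.proj (R := ℝ) (φ := fun _ : Fin d => ℝ) i).comp
    (ContinuousLinearMap.proj (R := ℝ) (φ := fun _ : Fin d => Fin d → ℝ) (σ i))).contDiff

def Eid {d : ℕ} : Fin d → Fin d → ℝ := fun i j => if i = j then 1 else 0

lemma det'_eq {d : ℕ} (t : ℝ) (M : Fin d → Fin d → ℝ) :
    det' (Eid + t • M) = Matrix.det (1 + t • Matrix.of M) := by
  unfold det'
  congr 1

lemma hasDerivAt_det'_path {d : ℕ} (M : Fin d → Fin d → ℝ) (t₀ : ℝ) :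
    HasDerivAt (fun t : ℝ => det' (Eid + t • M))
      (fderiv ℝ det' (Eid + t₀ • M) M) t₀ := by
  have hinner : HasDerivAt (fun t : ℝ => Eid (d := d) + t • M) M t₀ := by
    simpa using (HasDerivAt.const_add (Eid (d := d)) ((hasDerivAt_id t₀).smul_const M))
  have houter := (contDiff_det' (d := d)).differentiable (by simp) |>.differentiableAt
    (x := Eid + t₀ • M) |>.hasFDerivAt
  exact houter.comp_hasDerivAt t₀ hinner

lemma fderiv_det'_one {d : ℕ} (M : Fin d → Fin d → ℝ) :
    fderiv ℝ det' (Eid (d := d)) M = Matrix.trace (Matrix.of M) := by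
  have h1 : HasDerivAt (fun t : ℝ => det' (Eid + t • M))
      (fderiv ℝ det' (Eid (d := d)) M) 0 := by
    simpa using hasDerivAt_det'_path M 0
  set q : Polynomial ℝ :=
    (Matrix.det (1 + (Polynomial.X : Polynomial ℝ) • (Matrix.of M).map Polynomial.C)).divX.divX
  have h2 : HasDerivAt (fun t : ℝ => det' (Eid + t • M)) (Matrix.trace (Matrix.of M)) 0 := by
    have heq : (fun t : ℝ => det' (Eid + t • M)) =
        fun t => 1 + Matrix.trace (Matrix.of M) * t + Polynomial.eval t q * t ^ 2 := by
      funext t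
      rw [det'_eq, Matrix.det_one_add_smul]
    rw [heq]
    have hq : HasDerivAt (fun t : ℝ => Polynomial.eval t q * t ^ 2)
        (Polynomial.eval 0 q.derivative * 0 ^ 2 + Polynomial.eval 0 q * (2 * 0 ^ 1)) 0 :=
      (q.hasDerivAt 0).mul (hasDerivAt_pow 2 0)
    have hlin : HasDerivAt (fun t : ℝ => 1 + Matrix.trace (Matrix.of M) * t)
        (Matrix.trace (Matrix.of M)) 0 := by
      simpa using ((hasDerivAt_id (0:ℝ)).const_mul (Matrix.trace (Matrix.of M))).const_add 1
    exact (hlin.add hq).congr_deriv (by simp)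
  exact h1.unique h2

lemma fderiv_apply_eq_sum {d : ℕ} (f : (Fin d → ℝ) → ℝ) (x v : Fin d → ℝ) :
    fderiv ℝ f x v = ∑ i, v i * pd f i x := by
  have hv : v = ∑ i, v i • (Pi.single i (1:ℝ) : Fin d → ℝ) := by
    rw [← Finset.univ_sum_single v]
    congr 1
    funext i
    ext k
    simp [Pi.single_apply, mul_comm]
  conv_lhs => rw [hv]
  rw [map_sum]
  refine Finset.sum_congr rfl fun i _ => ?_
  rw [_root_.map_smul]
  simp [pd, smul_eq_mul]


/-- for a `C^{1,1}` vector field `θ` and `u ∈ H²(U)^d` (here a C² field on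
a set `U` containing `Ω̄`, with `Ω` bounded), setting `T_t = id + tθ` and
`I_t = det(DT_t) = det(1 + t·Dθ)`, the map `t ↦ I_t (u ∘ T_t)` is differentiable at
`t = 0` in `L²(Ω)^d` with derivative `∇·(u ⊗ θ) = (div(u_j θ))_j`, i.e. componentwise
`(I_t u∘T_t − u)/t → div(u_j θ)` in `L²(Ω)` as `t → 0⁺`. -/
theorem stmt19 {d : ℕ} (U Ω : Set (Fin d → ℝ)) (hU : IsOpen U) (hΩ : closure Ω ⊆ U)
    (hΩmeas : MeasurableSet Ω) (hΩb : Bornology.IsBounded Ω)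
    (θ : (Fin d → ℝ) → (Fin d → ℝ)) (hθ : ContDiff ℝ 1 θ)
    (hLip : ∃ L, LipschitzWith L (fderiv ℝ θ))
    (u : (Fin d → ℝ) → (Fin d → ℝ)) (hu : ContDiff ℝ 2 u) :
    ∀ j : Fin d,
      Filter.Tendsto
        (fun t : ℝ => ∫ x in Ω,
          ((Matrix.det (1 + t • jac θ x) * u (x + t • θ x) j - u x j) / t
              - divg (fun y => u y j • θ y) x) ^ 2)
        (nhdsWithin (0 : ℝ) (Set.Ioi 0)) (nhds 0) := by
  intro j
  classical
  set uj : (Fin d → ℝ) → ℝ := fun y => u y j with huj_def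
  have huj : ContDiff ℝ 2 uj :=
    (ContinuousLinearMap.proj (R := ℝ) (φ := fun _ : Fin d => ℝ) j).contDiff.comp hu
  have hujd : Differentiable ℝ uj := huj.differentiable (by norm_num)
  set J : (Fin d → ℝ) → (Fin d → Fin d → ℝ) :=
    fun x => fun i j' => pd (fun y => θ y i) j' x with hJ_def
  -- components of θ and continuity of J
  have hθi : ∀ i, ContDiff ℝ 1 (fun y => θ y i) := fun i =>
    (ContinuousLinearMap.proj (R := ℝ) (φ := fun _ : Fin d => ℝ) i).contDiff.comp hθ
  have hJcont : Continuous J := by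
    refine continuous_pi fun i => continuous_pi fun j' => ?_
    have h1 : Continuous fun x => fderiv ℝ (fun y => θ y i) x :=
      (hθi i).continuous_fderiv (by norm_num)
    exact h1.clm_apply continuous_const
  -- the function and its t-derivative
  set ψ : ℝ × (Fin d → ℝ) → ℝ := fun p =>
    fderiv ℝ det' (Eid + p.1 • J p.2) (J p.2) * uj (p.2 + p.1 • θ p.2)
      + det' (Eid + p.1 • J p.2) * (fderiv ℝ uj (p.2 + p.1 • θ p.2)) (θ p.2) with hψ_def
  have hψc : Continuous ψ := by
    have hJ2 : Continuous fun p : ℝ × (Fin d → ℝ) => J p.2 := hJcont.comp continuous_snd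
    have hA : Continuous fun p : ℝ × (Fin d → ℝ) => Eid (d := d) + p.1 • J p.2 :=
      continuous_const.add (continuous_fst.smul hJ2)
    have hT : Continuous fun p : ℝ × (Fin d → ℝ) => p.2 + p.1 • θ p.2 :=
      continuous_snd.add (continuous_fst.smul (hθ.continuous.comp continuous_snd))
    have hdet : Continuous fun p : ℝ × (Fin d → ℝ) => det' (Eid + p.1 • J p.2) :=
      (contDiff_det'.continuous).comp hA
    have hfd : Continuous (fderiv ℝ (det' (d := d))) :=
      contDiff_det'.continuous_fderiv (by simp)
    have h1 : Continuous fun p : ℝ × (Fin d → ℝ) =>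
        fderiv ℝ det' (Eid + p.1 • J p.2) (J p.2) := (hfd.comp hA).clm_apply hJ2
    have h2 : Continuous fun p : ℝ × (Fin d → ℝ) =>
        (fderiv ℝ uj (p.2 + p.1 • θ p.2)) (θ p.2) :=
      ((huj.continuous_fderiv (by norm_num)).comp hT).clm_apply
        (hθ.continuous.comp continuous_snd)
    exact (h1.mul (huj.continuous.comp hT)).add (hdet.mul h2)
  have hderiv : ∀ (x : Fin d → ℝ) (t₀ : ℝ),
      HasDerivAt (fun t : ℝ => det' (Eid + t • J x) * uj (x + t • θ x)) (ψ (t₀, x)) t₀ := by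
    intro x t₀
    have h1 := hasDerivAt_det'_path (J x) t₀
    have hin : HasDerivAt (fun t : ℝ => x + t • θ x) (θ x) t₀ := by
      simpa using (HasDerivAt.const_add x ((hasDerivAt_id t₀).smul_const (θ x)))
    have h2 : HasDerivAt (fun t : ℝ => uj (x + t • θ x))
        ((fderiv ℝ uj (x + t₀ • θ x)) (θ x)) t₀ :=
      (hujd (x + t₀ • θ x)).hasFDerivAt.comp_hasDerivAt (l := uj) t₀ hin
    exact h1.mul h2
  -- value of ψ at t = 0
  have hdet0 : det' (Eid (d := d)) = 1 := by
    have := det'_eq (d := d) 0 0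
    simpa using this
  have hψ0 : ∀ x, ψ (0, x) = divg (fun y => uj y • θ y) x := by
    intro x
    have htr : fderiv ℝ det' (Eid (d := d)) (J x) = divg θ x := by
      rw [fderiv_det'_one]
      simp [Matrix.trace, Matrix.diag, divg, hJ_def]
    have hpd : ∀ i k, pd (fun y => uj y * θ y i) k x
        = uj x * pd (fun y => θ y i) k x + θ x i * pd uj k x := by
      intro i k
      have hmul : fderiv ℝ (fun y => uj y * θ y i) x
          = uj x • fderiv ℝ (fun y => θ y i) x + θ x i • fderiv ℝ uj x :=
        fderiv_fun_mul (hujd x) (((hθi i).differentiable (by norm_num)) x)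
      simp [pd, hmul, smul_eq_mul]
    have hdivg : divg (fun y => uj y • θ y) x
        = uj x * divg θ x + ∑ i, θ x i * pd uj i x := by
      unfold divg
      have : ∀ i, pd (fun y => (uj y • θ y) i) i x = pd (fun y => uj y * θ y i) i x := by
        intro i; congr 1
      simp_rw [this, hpd]
      rw [Finset.sum_add_distrib, ← Finset.mul_sum]
    rw [hdivg, hψ_def]
    simp only [zero_smul, add_zero, htr, hdet0, one_mul]
    rw [fderiv_apply_eq_sum]
    ring
  -- compact sets and uniform continuity
  set K := closure Ω with hK_def
  have hKcomp : IsCompact K := hΩb.isCompact_closure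
  have hScomp : IsCompact (Set.Icc (0:ℝ) 1 ×ˢ K) := isCompact_Icc.prod hKcomp
  have hUC := hScomp.uniformContinuousOn_of_continuous hψc.continuousOn
  rw [Metric.uniformContinuousOn_iff] at hUC
  have hμ : volume Ω < ⊤ := hΩb.measure_lt_top
  set m := (volume Ω).toReal with hm_def
  have hm0 : 0 ≤ m := ENNReal.toReal_nonneg
  rw [Metric.tendsto_nhdsWithin_nhds]
  intro ε hε
  set ε' := Real.sqrt (ε / (2 * (m + 1))) with hε'_def
  have hε'pos : 0 < ε' := Real.sqrt_pos.2 (by positivity)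
  obtain ⟨δ, hδpos, hδ⟩ := hUC ε' hε'pos
  refine ⟨min δ 1, lt_min hδpos one_pos, ?_⟩
  intro t ht hdist
  have ht0 : 0 < t := ht
  have htδ : t < δ := lt_of_lt_of_le (by simpa [Real.dist_eq, abs_of_pos ht0] using hdist)
    (min_le_left _ _)
  have ht1 : t < 1 := lt_of_lt_of_le (by simpa [Real.dist_eq, abs_of_pos ht0] using hdist)
    (min_le_right _ _)
  -- pointwise bound
  have hbound : ∀ x ∈ Ω,
      ‖((Matrix.det (1 + t • jac θ x) * u (x + t • θ x) j - u x j) / t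
          - divg (fun y => u y j • θ y) x) ^ 2‖ ≤ ε' ^ 2 := by
    intro x hx
    have hxK : x ∈ K := subset_closure hx
    set φ : ℝ → ℝ := fun s => det' (Eid + s • J x) * uj (x + s • θ x) with hφ_def
    have hφcont : ContinuousOn φ (Set.Icc 0 t) := fun s _ =>
      ((hderiv x s).continuousAt).continuousWithinAt
    obtain ⟨c, hc, hceq⟩ := exists_hasDerivAt_eq_slope φ (fun s => ψ (s, x)) ht0 hφcont
      (fun s _ => hderiv x s)
    have hform : (Matrix.det (1 + t • jac θ x) * u (x + t • θ x) j - u x j) / t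
        - divg (fun y => u y j • θ y) x = ψ (c, x) - ψ (0, x) := by
      have hd : Matrix.det (1 + t • jac θ x) = det' (Eid + t • J x) := (det'_eq t (J x)).symm
      have hφ0 : φ 0 = uj x := by simp [hφ_def, hdet0]
      have hslope : ψ (c, x) = (det' (Eid + t • J x) * uj (x + t • θ x) - uj x) / t := by
        rw [hceq, hφ0, sub_zero]
      rw [hd, ← hψ0 x, hslope]
    rw [hform]
    have hmem1 : (c, x) ∈ Set.Icc (0:ℝ) 1 ×ˢ K :=
      ⟨⟨le_of_lt hc.1, le_of_lt (lt_trans hc.2 ht1)⟩, hxK⟩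
    have hmem2 : ((0:ℝ), x) ∈ Set.Icc (0:ℝ) 1 ×ˢ K := ⟨⟨le_refl 0, zero_le_one⟩, hxK⟩
    have hd12 : dist ((c, x) : ℝ × (Fin d → ℝ)) (0, x) < δ := by
      rw [Prod.dist_eq]
      simp only [dist_self, Real.dist_eq, sub_zero]
      rw [abs_of_pos hc.1]
      exact lt_of_le_of_lt (max_le (le_of_lt hc.2) (le_of_lt ht0)) htδ
    have := hδ _ hmem1 _ hmem2 hd12
    rw [Real.dist_eq] at this
    have habs : |ψ (c, x) - ψ (0, x)| ≤ ε' := le_of_lt this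
    rw [Real.norm_eq_abs, abs_pow]
    exact pow_le_pow_left₀ (abs_nonneg _) habs 2
  -- integral bound
  have hint := norm_setIntegral_le_of_norm_le_const (μ := volume) hμ hbound
  rw [Real.dist_eq, sub_zero]
  calc |∫ x in Ω, ((Matrix.det (1 + t • jac θ x) * u (x + t • θ x) j - u x j) / t
          - divg (fun y => u y j • θ y) x) ^ 2|
      ≤ ε' ^ 2 * m := by rw [← Real.norm_eq_abs]; exact hint
    _ = ε / (2 * (m + 1)) * m := by
        rw [hε'_def, Real.sq_sqrt (by positivity)]
    _ < ε := by
        rw [div_mul_eq_mul_div, div_lt_iff₀ (by positivity)]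
        nlinarith
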